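/- Let r ≥ 1 and 1 ≤ m ≤ r be integers, let G₁, …, G_r be groups, let Q be a finitely generated abelian group, and let φ : G₁ × ⋯ × G_r → Q be a surjective group homomorphism. Assume that the subgroup H = ker φ virtually surjects onto m-tuples, i.e. for every 1 ≤ i₁ < ⋯ < i_m ≤ r the projection p_{i₁,…,i_m}(H) has finite index in G_{i₁} × ⋯ × G_{i_m}. Then for every 1 ≤ j₁ < ⋯ < j_{r−m} ≤ r the image φ(G_{j₁} × ⋯ × G_{j_{r−m}}) is a finite index subgroup of Q, where G_{j₁} × ⋯ × G_{j_{r−m}} denotes the subgroup of G₁ × ⋯ × G_r consisting of elements whose coordinates outside {j₁, …, j_{r−m}} are trivial. (Lemma 6.2, first part.) -/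
import Mathlib

/-- Embedding of a sub-product into the full product, extending by 1. -/
def embAux {r : ℕ} (G : Fin r → Type*) [∀ i, Group (G i)] (S : Finset (Fin r)) :
    (∀ i : {x // x ∈ S}, G i.1) →* ∀ i, G i where
  toFun x i := if h : i ∈ S then x ⟨i, h⟩ else 1
  map_one' := by ext i; by_cases h : i ∈ S <;> simp [h]
  map_mul' x y := by ext i; by_cases h : i ∈ S <;> simp [h]

/-- Lemma 6.2 (first part): if `φ : G₁ × ⋯ × G_r → Q` is an epimorphism onto a finitely
generated abelian group whose kernel virtually surjects onto `m`-tuples, then the image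
under `φ` of any sub-product of `r − m` of the factors has finite index in `Q`. -/
theorem stmt_6 {r : ℕ} (hr : 1 ≤ r) (m : ℕ) (hm : 1 ≤ m) (hmr : m ≤ r)
    (G : Fin r → Type*) [∀ i, Group (G i)]
    (Q : Type*) [CommGroup Q] (hQfg : Group.FG Q)
    (φ : (∀ i, G i) →* Q) (hφ : Function.Surjective φ)
    (hvsp : ∀ S : Finset (Fin r), S.card = m →
      (Subgroup.map (Pi.monoidHom (fun i : {x // x ∈ S} => Pi.evalMonoidHom G i.1))
        φ.ker).index ≠ 0) :
    ∀ T : Finset (Fin r), T.card = r - m →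
      (Subgroup.map φ (Subgroup.pi ((↑T : Set (Fin r))ᶜ) (fun _ => ⊥))).index ≠ 0 := by
  intro T hT
  classical
  set S : Finset (Fin r) := Tᶜ with hS
  have hScard : S.card = m := by
    have := Finset.card_compl T
    simp only [hS, this, hT, Fintype.card_fin]
    omega
  set N : Subgroup Q := Subgroup.map φ (Subgroup.pi ((↑T : Set (Fin r))ᶜ) (fun _ => ⊥))
    with hNdef
  -- the T-part of any element maps into N
  have hmemT : ∀ g : ∀ i, G i, φ (embAux G T (fun i => g i.1)) ∈ N := by
    intro g
    refine Subgroup.mem_map.2 ⟨embAux G T (fun i => g i.1), ?_, rfl⟩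
    intro i hi
    have hiT : i ∉ T := by simpa using hi
    simp [embAux, hiT]
  -- decomposition g = (S-part) * (T-part)
  have hdec : ∀ g : ∀ i, G i,
      g = embAux G S (fun i => g i.1) * embAux G T (fun i => g i.1) := by
    intro g
    funext i
    by_cases h : i ∈ T
    · have hiS : i ∉ S := by simp [hS, h]
      simp [embAux, h, hiS]
    · have hiS : i ∈ S := by simp [hS, h]
      simp [embAux, h, hiS]
  set f : (∀ i : {x // x ∈ S}, G i.1) →* Q ⧸ N :=
    (QuotientGroup.mk' N).comp (φ.comp (embAux G S)) with hf
  have hfsurj : Function.Surjective f := by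
    intro q
    obtain ⟨q', rfl⟩ := QuotientGroup.mk'_surjective N q
    obtain ⟨g, rfl⟩ := hφ q'
    refine ⟨fun i => g i.1, ?_⟩
    have := hdec g
    have h1 : φ g = φ (embAux G S (fun i => g i.1)) * φ (embAux G T (fun i => g i.1)) := by
      conv_lhs => rw [this]
      rw [map_mul]
    simp only [hf, MonoidHom.comp_apply]
    rw [h1, map_mul]
    have : (QuotientGroup.mk' N) (φ (embAux G T (fun i => g i.1))) = 1 := by
      rw [QuotientGroup.mk'_apply]
      exact (QuotientGroup.eq_one_iff _).2 (hmemT g)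
    rw [this, mul_one]
  have hker : Subgroup.map (Pi.monoidHom (fun i : {x // x ∈ S} => Pi.evalMonoidHom G i.1))
      φ.ker ≤ f.ker := by
    rintro x ⟨g, hg, rfl⟩
    have hgφ : φ g = 1 := hg
    have hx : (Pi.monoidHom (fun i : {x // x ∈ S} => Pi.evalMonoidHom G i.1)) g
        = fun i : {x // x ∈ S} => g i.1 := rfl
    rw [MonoidHom.mem_ker, hx]
    have h1 : φ g = φ (embAux G S (fun i => g i.1)) * φ (embAux G T (fun i => g i.1)) := by
      conv_lhs => rw [hdec g]
      rw [map_mul]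
    have h2 : φ (embAux G S (fun i => g i.1))
        = (φ (embAux G T (fun i => g i.1)))⁻¹ := by
      rw [hgφ] at h1
      exact eq_inv_of_mul_eq_one_left h1.symm
    simp only [hf, MonoidHom.comp_apply, h2, map_inv, inv_eq_one]
    rw [QuotientGroup.mk'_apply]
    exact (QuotientGroup.eq_one_iff _).2 (hmemT g)
  have hdvd : f.ker.index ∣ (Subgroup.map
      (Pi.monoidHom (fun i : {x // x ∈ S} => Pi.evalMonoidHom G i.1)) φ.ker).index :=
    Subgroup.index_dvd_of_le hker
  have hne : f.ker.index ≠ 0 := fun h0 => hvsp S hScard (Nat.eq_zero_of_zero_dvd (h0 ▸ hdvd))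
  have hrange : f.range = ⊤ := MonoidHom.range_eq_top_of_surjective f hfsurj
  have hcard : N.index = f.ker.index := by
    rw [Subgroup.index_ker, hrange]
    have : Nat.card (⊤ : Subgroup (Q ⧸ N)) = Nat.card (Q ⧸ N) :=
      Nat.card_congr Subgroup.topEquiv.toEquiv
    rw [this]
    rfl
  rw [hcard]
  exact hne
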